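/- Let (A, θ) be a monounary algebra, x, y ∈ A, and A_x = {x} ∪ {a not cyclic : ∃n ≥ 1, θ^n(a) = x and θ^{n−1}(a) not cyclic} (similarly A_y). Suppose ψ : (A ∖ A_x) ∪ {x} → (A ∖ A_y) ∪ {y} is an isomorphism of partial monounary algebras with ψ(x) = y, and φ : A_x → A_y is an isomorphism of partial monounary algebras (necessarily φ(x) = y). Then the map Ψ : A → A defined by Ψ(a) = φ(a) for a ∈ A_x and Ψ(a) = ψ(a) otherwise is an automorphism of (A, θ). -/
import Mathlib


/-- The set `A_z` of elements lying "above" `z`, avoiding the cyclic part. -/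
def Az {A : Type*} (θ : A → A) (z : A) : Set A :=
  {z} ∪ {x | (¬ ∃ k ≥ 1, θ^[k] x = x) ∧
    ∃ n : ℕ, θ^[n + 1] x = z ∧ ¬ ∃ k ≥ 1, θ^[k] (θ^[n] x) = θ^[n] x}

section Aux

variable {A : Type*} (θ : A → A)

lemma cyc_iter {a : A} (h : ∃ k ≥ 1, θ^[k] a = a) (m : ℕ) :
    ∃ k ≥ 1, θ^[k] (θ^[m] a) = θ^[m] a := by
  obtain ⟨k, hk, hka⟩ := h
  refine ⟨k, hk, ?_⟩
  rw [← Function.iterate_add_apply, Nat.add_comm, Function.iterate_add_apply, hka]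

lemma mem_Az_self (z : A) : z ∈ Az θ z := Or.inl rfl

lemma Az_step {z a : A} (ha : a ∈ Az θ z) (hne : a ≠ z) : θ a ∈ Az θ z := by
  rcases ha with h | ⟨hnc, n, hn, hn'⟩
  · exact absurd h hne
  cases n with
  | zero => exact Or.inl hn
  | succ m =>
    right
    refine ⟨fun hc => hn' ?_, m, ?_, ?_⟩
    · have := cyc_iter θ hc m
      rwa [← Function.iterate_succ_apply] at this
    · rw [← Function.iterate_succ_apply]; exact hn
    · rw [← Function.iterate_succ_apply]; exact hn'

lemma Az_enter {z a : A} (ha : a ∉ Az θ z) (hθa : θ a ∈ Az θ z) : θ a = z := by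
  by_contra hne
  rcases hθa with h | ⟨hnc, n, hn, hn'⟩
  · exact hne h
  refine ha (Or.inr ⟨fun hc => hnc ?_, n + 1, ?_, ?_⟩)
  · simpa using cyc_iter θ hc 1
  · rw [Function.iterate_succ_apply]
    rw [Function.iterate_succ_apply] at hn ⊢
    exact hn
  · rw [Function.iterate_succ_apply]; exact hn'

lemma Az_reach {z a : A} (ha : a ∈ Az θ z) : ∃ m, θ^[m] a = z := by
  rcases ha with h | ⟨_, n, hn, _⟩
  · exact ⟨0, h⟩
  · exact ⟨n + 1, hn⟩

lemma Az_root_unique {z w : A} (hw : w ∈ Az θ z) {m : ℕ} (hm : θ^[m] z = w) :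
    w = z := by
  rcases hw with h | ⟨hnc, n, hn, _⟩
  · exact h
  rcases Nat.eq_zero_or_pos m with rfl | hmpos
  · exact hm.symm
  exact absurd ⟨m + (n + 1), by omega,
    by rw [Function.iterate_add_apply, hn, hm]⟩ hnc

end Aux

open scoped Classical in
theorem stmt_13 {A : Type*} (θ : A → A) (x y : A) (ψ φ : A → A)
    (hψ : Set.BijOn ψ ((Az θ x)ᶜ ∪ {x}) ((Az θ y)ᶜ ∪ {y}))
    (hψx : ψ x = y)
    (hψdom : ∀ a ∈ (Az θ x)ᶜ ∪ {x},
      (θ a ∈ (Az θ x)ᶜ ∪ {x} ↔ θ (ψ a) ∈ (Az θ y)ᶜ ∪ {y}))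
    (hψcomm : ∀ a ∈ (Az θ x)ᶜ ∪ {x}, θ a ∈ (Az θ x)ᶜ ∪ {x} → ψ (θ a) = θ (ψ a))
    (hφ : Set.BijOn φ (Az θ x) (Az θ y))
    (hφdom : ∀ a ∈ Az θ x, (θ a ∈ Az θ x ↔ θ (φ a) ∈ Az θ y))
    (hφcomm : ∀ a ∈ Az θ x, θ a ∈ Az θ x → φ (θ a) = θ (φ a)) :
    Function.Bijective (fun a => if a ∈ Az θ x then φ a else ψ a) ∧
      ∀ a : A, (if θ a ∈ Az θ x then φ (θ a) else ψ (θ a))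
        = θ (if a ∈ Az θ x then φ a else ψ a) := by
  have hxmem : x ∈ (Az θ x)ᶜ ∪ {x} := Or.inr rfl
  -- ψ restricts to a bijection between the complements
  have hψ' : Set.BijOn ψ ((Az θ x)ᶜ) ((Az θ y)ᶜ) := by
    refine ⟨fun a ha => ?_, hψ.injOn.mono Set.subset_union_left, fun b hb => ?_⟩
    · rcases hψ.mapsTo (Or.inl ha) with h | h
      · exact h
      · exfalso
        have : a = x := hψ.injOn (Or.inl ha) hxmem (by rw [hψx]; exact h)
        exact ha (this ▸ mem_Az_self θ x)
    · obtain ⟨a, ha, rfl⟩ := hψ.surjOn (Or.inl hb)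
      rcases ha with ha | ha
      · exact ⟨a, ha, rfl⟩
      · exact absurd (show ψ a ∈ Az θ y by
          rw [show a = x from ha, hψx]; exact mem_Az_self θ y) hb
  -- iterated commutation along the minimal path to the root
  have key : ∀ m : ℕ, ∀ a ∈ Az θ x, θ^[m] a = x → (∀ j < m, θ^[j] a ≠ x) →
      θ^[m] (φ a) = φ x := by
    intro m
    induction m with
    | zero => intro a _ h _; simpa using congrArg φ h
    | succ m ih =>
      intro a ha h hmin
      have hax : a ≠ x := by simpa using hmin 0 (Nat.succ_pos m)
      have hθa : θ a ∈ Az θ x := Az_step θ ha hax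
      have hc : φ (θ a) = θ (φ a) := hφcomm a ha hθa
      have := ih (θ a) hθa (by rw [← Function.iterate_succ_apply]; exact h)
        (fun j hj => by rw [← Function.iterate_succ_apply]; exact hmin (j + 1) (by omega))
      rw [hc] at this
      rw [Function.iterate_succ_apply]
      exact this
  -- φ x = y
  have hφx : φ x = y := by
    obtain ⟨a, ha, hay⟩ := hφ.surjOn (mem_Az_self θ y)
    have hex : ∃ m, θ^[m] a = x := Az_reach θ ha
    have hfind := Nat.find_spec hex
    have hmin : ∀ j < Nat.find hex, θ^[j] a ≠ x := fun j hj => Nat.find_min hex hj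
    have hk := key (Nat.find hex) a ha hfind hmin
    rw [hay] at hk
    exact Az_root_unique θ (hφ.mapsTo (mem_Az_self θ x)) hk
  constructor
  · constructor
    · -- injective
      intro a b hab
      simp only at hab
      by_cases ha : a ∈ Az θ x <;> by_cases hb : b ∈ Az θ x
      · rw [if_pos ha, if_pos hb] at hab
        exact hφ.injOn ha hb hab
      · rw [if_pos ha, if_neg hb] at hab
        exact absurd (show ψ b ∈ Az θ y from hab ▸ hφ.mapsTo ha) (hψ'.mapsTo hb)
      · rw [if_neg ha, if_pos hb] at hab
        exact absurd (show ψ a ∈ Az θ y from hab ▸ hφ.mapsTo hb) (hψ'.mapsTo ha)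
      · rw [if_neg ha, if_neg hb] at hab
        exact hψ'.injOn ha hb hab
    · -- surjective
      intro b
      by_cases hb : b ∈ Az θ y
      · obtain ⟨a, ha, rfl⟩ := hφ.surjOn hb
        exact ⟨a, by simp only; rw [if_pos ha]⟩
      · obtain ⟨a, ha, rfl⟩ := hψ'.surjOn hb
        exact ⟨a, by simp only; rw [if_neg ha]⟩
  · intro a
    by_cases ha : a ∈ Az θ x <;> by_cases hθa : θ a ∈ Az θ x
    · rw [if_pos ha, if_pos hθa]
      exact hφcomm a ha hθa
    · rw [if_pos ha, if_neg hθa]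
      -- a ∈ Az x, θ a ∉ Az x ⟹ a = x
      have hax : a = x := by
        by_contra hne
        exact hθa (Az_step θ ha hne)
      subst hax
      rw [hφx, ← hψx]
      exact hψcomm a hxmem (Or.inl hθa)
    · rw [if_neg ha, if_pos hθa]
      -- a ∉ Az x, θ a ∈ Az x ⟹ θ a = x
      have h1 : θ a = x := Az_enter θ ha hθa
      have h2 : ψ (θ a) = θ (ψ a) := hψcomm a (Or.inl ha) (Or.inr h1)
      rw [h1] at h2 ⊢
      rw [hφx, ← hψx, h2]
    · rw [if_neg ha, if_neg hθa]
      exact hψcomm a (Or.inl ha) (Or.inl hθa)
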